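/- Let K and L be essentially small tt-categories with K rigid, let F : K → L be a tt-functor and φ = Spc(F) the induced map. For every object x ∈ K choose a distinguished triangle w_x →ξ_x→ 𝟙 →η_x→ x^∨ ⊗ x → Σw_x over the coevaluation η_x. Let P ∈ Spc(K) be a prime satisfying: for all x ∈ P, all s ∈ K \ P and all n ≥ 1, one has F(ξ_x^⊗n ⊗ s) ≠ 0. Then P belongs to the image of φ, i.e. there exists Q ∈ Spc(L) with F⁻¹(Q) = P. -/

import Mathlib

/-!
Basic notions of tensor-triangular geometry (Balmer), formalized from scratch:
tt-categories (pretriangulated + monoidal, with tensor exact in each variable),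
tt-ideals, prime tt-ideals, the Balmer spectrum `Spc` with its topology,
tensor powers of objects and morphisms, rigidity.
-/

open CategoryTheory Category Limits ZeroObject Pretriangulated MonoidalCategory

universe v u v' u'

namespace TT

variable (K : Type u) [Category.{v} K] [HasZeroObject K] [Preadditive K]
  [HasShift K ℤ] [∀ n : ℤ, (shiftFunctor K n).Additive] [Pretriangulated K]
  [MonoidalCategory K]

/-- The tensor is exact (triangulated) in each variable: tensoring a distinguished
triangle with an object (on either side) again yields a distinguished triangle. -/
def TensorExact : Prop :=
  ∀ (x : K) (T : Triangle K), (T ∈ distTriang K) →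
    (∃ h : x ⊗ T.obj₃ ⟶ (x ⊗ T.obj₁)⟦(1:ℤ)⟧,
      Triangle.mk (x ◁ T.mor₁) (x ◁ T.mor₂) h ∈ distTriang K) ∧
    (∃ h : T.obj₃ ⊗ x ⟶ (T.obj₁ ⊗ x)⟦(1:ℤ)⟧,
      Triangle.mk (T.mor₁ ▷ x) (T.mor₂ ▷ x) h ∈ distTriang K)

/-- Rigidity: every object `x` has a dual `x^∨`, i.e. takes part in an exact pairing
(coevaluation `η : 𝟙 ⟶ x^∨ ⊗ x` and evaluation `ε : x ⊗ x^∨ ⟶ 𝟙` satisfying the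
triangle identities, which yield the adjunction `x ⊗ - ⊣ x^∨ ⊗ -`). -/
def Rigid : Prop := ∀ x : K, ∃ xd : K, Nonempty (ExactPairing xd x)

variable {K}

/-- A tt-ideal: a (full, replete) class of objects closed under shifts, cones,
direct summands (retracts) and tensoring with arbitrary objects. -/
structure IsTTIdeal (I : Set K) : Prop where
  zero_mem : (0 : K) ∈ I
  shift_mem : ∀ (n : ℤ), ∀ x ∈ I, (x⟦n⟧ : K) ∈ I
  cone_mem : ∀ T : Triangle K, (T ∈ distTriang K) → T.obj₁ ∈ I → T.obj₂ ∈ I → T.obj₃ ∈ I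
  retract_mem : ∀ x z : K, z ∈ I → ∀ (i : x ⟶ z) (r : z ⟶ x), i ≫ r = 𝟙 x → x ∈ I
  tensor_mem : ∀ x ∈ I, ∀ y : K, x ⊗ y ∈ I
  tensor_mem' : ∀ x ∈ I, ∀ y : K, y ⊗ x ∈ I

/-- A prime tt-ideal: a proper tt-ideal `P` such that `x ⊗ y ∈ P` implies
`x ∈ P` or `y ∈ P`. -/
structure IsPrimeTTIdeal (P : Set K) extends IsTTIdeal P : Prop where
  ne_univ : P ≠ Set.univ
  mem_or_mem : ∀ x y : K, x ⊗ y ∈ P → x ∈ P ∨ y ∈ P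

variable (K) in
/-- The Balmer spectrum: the set of prime tt-ideals. -/
def Spc := {P : Set K // IsPrimeTTIdeal P}

/-- The Balmer topology on `Spc K`, generated by the basic open subsets
`U(x) = {P ∈ Spc K | x ∈ P}`. -/
instance : TopologicalSpace (Spc K) :=
  TopologicalSpace.generateFrom {U | ∃ x : K, U = {P : Spc K | x ∈ P.1}}

/-- The tt-ideal `⟨E⟩` generated by a class of objects `E`. -/
def ttIdealGen (E : Set K) : Set K := ⋂₀ {I : Set K | IsTTIdeal I ∧ E ⊆ I}

/-- `n`-fold tensor power of an object (`x^⊗0 = 𝟙`). -/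
def opow (x : K) : ℕ → K
  | 0 => 𝟙_ K
  | n + 1 => opow x n ⊗ x

/-- `n`-fold tensor power `f^⊗n` of a morphism. -/
def mpow {x y : K} (f : x ⟶ y) : ∀ n : ℕ, (opow x n ⟶ opow y n)
  | 0 => 𝟙 _
  | n + 1 => mpow f n ⊗ₘ f

end TT

open TT

namespace Balmer
set_option linter.unusedSectionVars false

variable {D : Type*} [Category D] [HasZeroObject D] [Preadditive D]
  [HasShift D ℤ] [∀ n : ℤ, (shiftFunctor D n).Additive] [Pretriangulated D]
  [MonoidalCategory D]

lemma isZero_tensor_left (hD : TensorExact D) (A : D) {Z : D} (hZ : IsZero Z) :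
    IsZero (A ⊗ Z) := by
  have hT : Triangle.mk (𝟙 Z) (𝟙 Z) (0 : Z ⟶ Z⟦(1:ℤ)⟧) ∈ distTriang D := by
    refine isomorphic_distinguished _ (contractible_distinguished Z) _ ?_
    exact Triangle.isoMk _ _ (Iso.refl Z) (Iso.refl Z) hZ.isoZero
      (by rfl) (by apply (isZero_zero D).eq_of_tgt) (by erw [zero_comp, comp_zero])
  obtain ⟨h, hd⟩ := (hD A _ hT).1
  have := comp_distTriang_mor_zero₁₂ _ hd
  simp only [Triangle.mk_obj₁, Triangle.mk_obj₂, Triangle.mk_mor₁, Triangle.mk_mor₂,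
    MonoidalCategory.whiskerLeft_id, id_comp] at this
  rw [IsZero.iff_id_eq_zero]
  have h' : A ◁ 𝟙 Z ≫ A ◁ 𝟙 Z = 0 := this
  simpa using h'

lemma shift_one_tensor_iso (hD : TensorExact D) (A y : D) :
    Nonempty (A ⊗ (y⟦(1:ℤ)⟧) ≅ (A ⊗ y)⟦(1:ℤ)⟧) := by
  obtain ⟨h, hd⟩ := (hD A _ (contractible_distinguished₂ y)).1
  have h2 : IsZero ((Triangle.mk (A ◁ (0 : y ⟶ 0)) (A ◁ (0 : (0:D) ⟶ y⟦(1:ℤ)⟧)) h).obj₂) :=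
    isZero_tensor_left hD A (isZero_zero D)
  have h3 : IsIso (Triangle.mk (A ◁ (0 : y ⟶ 0)) (A ◁ (0 : (0:D) ⟶ y⟦(1:ℤ)⟧)) h).mor₃ :=
    (Triangle.isZero₂_iff_isIso₃ _ hd).1 h2
  exact ⟨@asIso _ _ _ _ h h3⟩

lemma iso_of_shift_iso {X Y : D} (e : (X⟦(1:ℤ)⟧ : D) ≅ Y⟦(1:ℤ)⟧) : Nonempty (X ≅ Y) := by
  refine ⟨?_⟩
  calc X ≅ (X⟦(1:ℤ)⟧)⟦(-1:ℤ)⟧ := ((shiftFunctorCompIsoId D (1:ℤ) (-1:ℤ) (by omega)).app X).symm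
    _ ≅ (Y⟦(1:ℤ)⟧)⟦(-1:ℤ)⟧ := (shiftFunctor D (-1:ℤ)).mapIso e
    _ ≅ Y := (shiftFunctorCompIsoId D (1:ℤ) (-1:ℤ) (by omega)).app Y

lemma shift_tensor_iso (hD : TensorExact D) (A y : D) (n : ℤ) :
    Nonempty (A ⊗ (y⟦n⟧) ≅ (A ⊗ y)⟦n⟧) := by
  induction n using Int.induction_on with
  | zero => exact ⟨(whiskerLeftIso A ((shiftFunctorZero D ℤ).app y)) ≪≫
      ((shiftFunctorZero D ℤ).app (A ⊗ y)).symm⟩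
  | succ k hk =>
      obtain ⟨e⟩ := hk
      obtain ⟨e1⟩ := shift_one_tensor_iso hD A (y⟦(k:ℤ)⟧)
      refine ⟨whiskerLeftIso A ((shiftFunctorAdd' D (k:ℤ) 1 (k+1) rfl).app y) ≪≫ e1 ≪≫
        (shiftFunctor D (1:ℤ)).mapIso e ≪≫
        ((shiftFunctorAdd' D (k:ℤ) 1 (k+1) rfl).app (A ⊗ y)).symm⟩
  | pred k hk =>
      obtain ⟨e⟩ := hk
      obtain ⟨e1⟩ := shift_one_tensor_iso hD A (y⟦(-k-1:ℤ)⟧)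
      have e2 : ((A ⊗ (y⟦(-k-1:ℤ)⟧))⟦(1:ℤ)⟧ : D) ≅ ((A ⊗ y)⟦(-k-1:ℤ)⟧)⟦(1:ℤ)⟧ := by
        calc ((A ⊗ (y⟦(-k-1:ℤ)⟧))⟦(1:ℤ)⟧ : D)
            ≅ A ⊗ ((y⟦(-k-1:ℤ)⟧)⟦(1:ℤ)⟧) := e1.symm
          _ ≅ A ⊗ (y⟦(-k:ℤ)⟧) := whiskerLeftIso A
              (((shiftFunctorAdd' D (-k-1:ℤ) 1 (-k) (by omega)).app y).symm)
          _ ≅ (A ⊗ y)⟦(-k:ℤ)⟧ := e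
          _ ≅ ((A ⊗ y)⟦(-k-1:ℤ)⟧)⟦(1:ℤ)⟧ :=
              (shiftFunctorAdd' D (-k-1:ℤ) 1 (-k) (by omega)).app (A ⊗ y)
      obtain ⟨e3⟩ := iso_of_shift_iso e2
      exact ⟨e3⟩

/-- Closure of an object under shifts, left tensoring and isomorphism. -/
inductive TClos (y : D) : D → Prop
  | base : TClos y y
  | shift (z : D) (n : ℤ) : TClos y z → TClos y (z⟦n⟧)
  | tens (z A : D) : TClos y z → TClos y (A ⊗ z)
  | isoc (z z' : D) : TClos y z → Nonempty (z ≅ z') → TClos y z'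

lemma TClos.trans {y z z' : D} (h : TClos y z) (h' : TClos z z') : TClos y z' := by
  induction h' with
  | base => exact h
  | shift w n hw ih => exact ih.shift w n
  | tens w A hw ih => exact ih.tens w A
  | isoc w w' hw e ih => exact TClos.isoc _ _ ih e

/-- `f` tensor-kills `y` together with its whole closure. -/
def Kills {A B : D} (f : A ⟶ B) (y : D) : Prop := ∀ z, TClos y z → f ▷ z = 0

lemma Kills.of_tclos {A B : D} {f : A ⟶ B} {y y' : D} (h : Kills f y) (hy : TClos y y') :
    Kills f y' := fun z hz => h z (hy.trans hz)

lemma Kills.factor {A B A' B' : D} {f : A ⟶ B} {g : A' ⟶ B'} {y : D} (h : Kills f y)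
    (pre : A' ⟶ A) (post : B ⟶ B') (hg : g = pre ≫ f ≫ post) : Kills g y := by
  intro z hz
  rw [hg, comp_whiskerRight, comp_whiskerRight, h z hz, zero_comp, comp_zero]

lemma whiskerRight_eq_zero_of_retract {A B z w : D} (f : A ⟶ B) (i : z ⟶ w) (r : w ⟶ z)
    (hir : i ≫ r = 𝟙 z) (hw : f ▷ w = 0) : f ▷ z = 0 := by
  have h1 : A ◁ i ≫ f ▷ w = f ▷ z ≫ B ◁ i := whisker_exchange f i
  have h2 : (f ▷ z ≫ B ◁ i) ≫ B ◁ r = 0 := by rw [← h1, hw, comp_zero, zero_comp]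
  simpa [← MonoidalCategory.whiskerLeft_comp, hir] using h2

lemma TClos.exists_retract {y w : D} (hD : TensorExact D) (i : y ⟶ w) (r : w ⟶ y)
    (hir : i ≫ r = 𝟙 y) {z : D} (hz : TClos y z) :
    ∃ (z' : D) (i' : z ⟶ z') (r' : z' ⟶ z), TClos w z' ∧ i' ≫ r' = 𝟙 z := by
  induction hz with
  | base => exact ⟨w, i, r, TClos.base, hir⟩
  | shift u n hu ih =>
      obtain ⟨z', i', r', hz', hir'⟩ := ih
      exact ⟨z'⟦n⟧, i'⟦n⟧', r'⟦n⟧', hz'.shift _ n,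
        by rw [← Functor.map_comp, hir']; simp⟩
  | tens u A hu ih =>
      obtain ⟨z', i', r', hz', hir'⟩ := ih
      exact ⟨A ⊗ z', A ◁ i', A ◁ r', hz'.tens _ A,
        by rw [← MonoidalCategory.whiskerLeft_comp, hir', MonoidalCategory.whiskerLeft_id]⟩
  | isoc u u' hu e ih =>
      obtain ⟨z', i', r', hz', hir'⟩ := ih
      obtain ⟨e⟩ := e
      exact ⟨z', e.inv ≫ i', r' ≫ e.hom, hz',
        by rw [assoc, ← assoc i', hir', id_comp, e.inv_hom_id]⟩

lemma Kills.of_retract {A B : D} {f : A ⟶ B} {y w : D} (hD : TensorExact D)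
    (i : y ⟶ w) (r : w ⟶ y) (hir : i ≫ r = 𝟙 y) (h : Kills f w) : Kills f y := by
  intro z hz
  obtain ⟨z', i', r', hz', hir'⟩ := TClos.exists_retract hD i r hir hz
  exact whiskerRight_eq_zero_of_retract f i' r' hir' (h z' hz')

lemma Kills.of_iso {A B : D} {f : A ⟶ B} {y w : D} (hD : TensorExact D)
    (e : y ≅ w) (h : Kills f w) : Kills f y :=
  h.of_retract hD e.hom e.inv e.hom_inv_id

lemma TClos.isZero {y z : D} (hD : TensorExact D) (hy : IsZero y) (hz : TClos y z) :
    IsZero z := by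
  induction hz with
  | base => exact hy
  | shift u n hu ih => exact (shiftFunctor D n).map_isZero ih
  | tens u A hu ih => exact isZero_tensor_left hD A ih
  | isoc u u' hu e ih => exact ih.of_iso e.some.symm

lemma Kills.of_isZero {A B : D} (f : A ⟶ B) {y : D} (hD : TensorExact D) (hy : IsZero y) :
    Kills f y := fun z hz =>
  IsZero.eq_of_src (isZero_tensor_left hD A (hz.isZero hD hy)) _ _

lemma TClos.triangle (hD : TensorExact D) {T : Triangle D} (hT : T ∈ distTriang D)
    {z : D} (hz : TClos T.obj₃ z) :
    ∃ T' : Triangle D, (T' ∈ distTriang D) ∧ TClos T.obj₁ T'.obj₁ ∧ TClos T.obj₂ T'.obj₂ ∧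
      Nonempty (T'.obj₃ ≅ z) := by
  induction hz with
  | base => exact ⟨T, hT, TClos.base, TClos.base, ⟨Iso.refl _⟩⟩
  | shift u n hu ih =>
      obtain ⟨T', hT', h1, h2, ⟨e⟩⟩ := ih
      refine ⟨(CategoryTheory.shiftFunctor (Triangle D) n).obj T',
        Triangle.shift_distinguished T' hT' n, h1.shift _ n, h2.shift _ n,
        ⟨(shiftFunctor D n).mapIso e⟩⟩
  | tens u A hu ih =>
      obtain ⟨T', hT', h1, h2, ⟨e⟩⟩ := ih
      obtain ⟨h, hd⟩ := (hD A T' hT').1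
      exact ⟨_, hd, h1.tens _ A, h2.tens _ A, ⟨whiskerLeftIso A e⟩⟩
  | isoc u u' hu e ih =>
      obtain ⟨T', hT', h1, h2, ⟨e'⟩⟩ := ih
      exact ⟨T', hT', h1, h2, ⟨e' ≪≫ e.some⟩⟩

lemma Kills.cone (hD : TensorExact D) {T : Triangle D} (hT : T ∈ distTriang D)
    {A₁ B₁ A₂ B₂ : D} {f : A₁ ⟶ B₁} {g : A₂ ⟶ B₂}
    (h₁ : Kills f T.obj₁) (h₂ : Kills g T.obj₂) : Kills (f ⊗ₘ g) T.obj₃ := by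
  intro z hz
  obtain ⟨T', hT', hc1, hc2, ⟨e⟩⟩ := TClos.triangle hD hT hz
  refine whiskerRight_eq_zero_of_retract _ e.inv e.hom e.inv_hom_id ?_
  -- factor `g ▷ T'.obj₃` through `A₂ ◁ T'.mor₃`
  obtain ⟨hR, hdR⟩ := (hD A₂ T'.rotate (rot_of_distTriang T' hT')).1
  have hfac : (A₂ ◁ T'.mor₂) ≫ (g ▷ T'.obj₃) = 0 := by
    rw [whisker_exchange g T'.mor₂, h₂ _ hc2, zero_comp]
  obtain ⟨γ, hγ⟩ := Triangle.yoneda_exact₂ _ hdR (g ▷ T'.obj₃) hfac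
  -- the key vanishing
  have hkey : f ▷ ((Triangle.mk (A₂ ◁ T'.rotate.mor₁) (A₂ ◁ T'.rotate.mor₂) hR).obj₃) = 0 :=
    h₁ _ ((hc1.shift _ 1).tens _ A₂)
  have e1 : (A₁ ◁ g) ▷ T'.obj₃ =
      (α_ A₁ A₂ T'.obj₃).hom ≫ (A₁ ◁ (g ▷ T'.obj₃)) ≫ (α_ A₁ B₂ T'.obj₃).inv :=
    whisker_assoc A₁ g T'.obj₃
  have e2 : (f ▷ B₂) ▷ T'.obj₃ =
      (α_ A₁ B₂ T'.obj₃).hom ≫ (f ▷ (B₂ ⊗ T'.obj₃)) ≫ (α_ B₁ B₂ T'.obj₃).inv := by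
    rw [← associator_naturality_left_assoc f B₂ T'.obj₃]
    simp
  have hγ' : g ▷ T'.obj₃ = (A₂ ◁ T'.mor₃) ≫ γ := by exact hγ
  have h5 : (A₁ ◁ γ) ≫ (f ▷ (B₂ ⊗ T'.obj₃)) = 0 := by
    have hex := whisker_exchange f γ
    rw [hex, hkey, zero_comp]
  have h6 : A₁ ◁ (g ▷ T'.obj₃) ≫ f ▷ (B₂ ⊗ T'.obj₃) = 0 := by
    rw [hγ']
    erw [MonoidalCategory.whiskerLeft_comp]
    erw [assoc, h5, comp_zero]
  calc (f ⊗ₘ g) ▷ T'.obj₃ = ((A₁ ◁ g) ≫ (f ▷ B₂)) ▷ T'.obj₃ := by rw [← tensorHom_def']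
    _ = ((A₁ ◁ g) ▷ T'.obj₃) ≫ ((f ▷ B₂) ▷ T'.obj₃) := by rw [comp_whiskerRight]
    _ = (α_ A₁ A₂ T'.obj₃).hom ≫ (A₁ ◁ (g ▷ T'.obj₃) ≫ f ▷ (B₂ ⊗ T'.obj₃)) ≫
          (α_ B₁ B₂ T'.obj₃).inv := by rw [e1, e2]; simp
    _ = 0 := by rw [h6]; simp

section Ideals

open TT

variable {I : Set D}

lemma _root_.TT.IsTTIdeal.mem_of_iso (hI : IsTTIdeal I) {a b : D} (e : Nonempty (a ≅ b)) (hb : b ∈ I) :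
    a ∈ I :=
  hI.retract_mem a b hb e.some.hom e.some.inv e.some.hom_inv_id

lemma _root_.TT.IsTTIdeal.isZero_mem (hI : IsTTIdeal I) {z : D} (hz : IsZero z) : z ∈ I :=
  hI.mem_of_iso ⟨hz.isoZero⟩ hI.zero_mem

lemma isTTIdeal_ttIdealGen (E : Set D) : IsTTIdeal (ttIdealGen E) where
  zero_mem := Set.mem_sInter.2 fun _ hI => hI.1.zero_mem
  shift_mem := fun n x hx => Set.mem_sInter.2 fun I hI =>
    hI.1.shift_mem n x (Set.mem_sInter.1 hx I hI)
  cone_mem := fun T hT h1 h2 => Set.mem_sInter.2 fun I hI =>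
    hI.1.cone_mem T hT (Set.mem_sInter.1 h1 I hI) (Set.mem_sInter.1 h2 I hI)
  retract_mem := fun x z hz i r hir => Set.mem_sInter.2 fun I hI =>
    hI.1.retract_mem x z (Set.mem_sInter.1 hz I hI) i r hir
  tensor_mem := fun x hx y => Set.mem_sInter.2 fun I hI =>
    hI.1.tensor_mem x (Set.mem_sInter.1 hx I hI) y
  tensor_mem' := fun x hx y => Set.mem_sInter.2 fun I hI =>
    hI.1.tensor_mem' x (Set.mem_sInter.1 hx I hI) y

lemma subset_ttIdealGen (E : Set D) : E ⊆ ttIdealGen E :=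
  fun _ hx => Set.mem_sInter.2 fun _ hI => hI.2 hx

lemma ttIdealGen_le {E : Set D} (hI : IsTTIdeal I) (hE : E ⊆ I) : ttIdealGen E ⊆ I :=
  fun x hx => Set.mem_sInter.1 hx I ⟨hI, hE⟩

lemma ttIdealGen_mono {E E' : Set D} (h : E ⊆ E') : ttIdealGen E ⊆ ttIdealGen E' :=
  fun x hx => Set.mem_sInter.2 fun I hI => Set.mem_sInter.1 hx I ⟨hI.1, h.trans hI.2⟩

lemma _root_.TT.IsTTIdeal.biprod_mem (hI : IsTTIdeal I) {a b : D} (ha : a ∈ I) (hb : b ∈ I) :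
    (a ⊞ b : D) ∈ I := by
  have hT := inv_rot_of_distTriang _ (binaryBiproductTriangle_distinguished a b)
  exact hI.cone_mem _ hT (hI.shift_mem _ b hb) ha

lemma isTTIdeal_sUnion {S : Set (Set D)} (hne : S.Nonempty)
    (hdir : DirectedOn (· ⊆ ·) S) (h : ∀ I ∈ S, IsTTIdeal I) : IsTTIdeal (⋃₀ S) where
  zero_mem := ⟨hne.choose, hne.choose_spec, (h _ hne.choose_spec).zero_mem⟩
  shift_mem := by
    rintro n x ⟨J, hJS, hxJ⟩
    exact ⟨J, hJS, (h J hJS).shift_mem n x hxJ⟩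
  cone_mem := by
    rintro T hT ⟨J1, h1S, h1⟩ ⟨J2, h2S, h2⟩
    obtain ⟨J3, h3S, h13, h23⟩ := hdir J1 h1S J2 h2S
    exact ⟨J3, h3S, (h J3 h3S).cone_mem T hT (h13 h1) (h23 h2)⟩
  retract_mem := by
    rintro x z ⟨J, hJS, hz⟩ i r hir
    exact ⟨J, hJS, (h J hJS).retract_mem x z hz i r hir⟩
  tensor_mem := by
    rintro x ⟨J, hJS, hx⟩ y
    exact ⟨J, hJS, (h J hJS).tensor_mem x hx y⟩
  tensor_mem' := by
    rintro x ⟨J, hJS, hx⟩ y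
    exact ⟨J, hJS, (h J hJS).tensor_mem' x hx y⟩

variable [SymmetricCategory D]

lemma isTTIdeal_tensor_left (hD : TensorExact D) (hI : IsTTIdeal I) (a : D) :
    IsTTIdeal {y : D | a ⊗ y ∈ I} where
  zero_mem := hI.isZero_mem (isZero_tensor_left hD a (isZero_zero D))
  shift_mem := fun n y hy => hI.mem_of_iso (shift_tensor_iso hD a y n) (hI.shift_mem n _ hy)
  cone_mem := fun T hT h1 h2 => by
    obtain ⟨h, hd⟩ := (hD a T hT).1
    exact hI.cone_mem _ hd h1 h2
  retract_mem := fun x z hz i r hir => hI.retract_mem _ _ hz (a ◁ i) (a ◁ r)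
    (by rw [← MonoidalCategory.whiskerLeft_comp, hir, MonoidalCategory.whiskerLeft_id])
  tensor_mem := fun y hy z => hI.mem_of_iso ⟨(α_ a y z).symm⟩ (hI.tensor_mem _ hy z)
  tensor_mem' := fun y hy z => by
    have hm : z ⊗ (a ⊗ y) ∈ I := hI.tensor_mem' _ hy z
    refine hI.mem_of_iso ⟨?_⟩ hm
    calc a ⊗ (z ⊗ y) ≅ (a ⊗ z) ⊗ y := (α_ _ _ _).symm
      _ ≅ (z ⊗ a) ⊗ y := whiskerRightIso (β_ a z) y
      _ ≅ z ⊗ (a ⊗ y) := α_ _ _ _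

lemma isTTIdeal_tensor_right (hD : TensorExact D) (hI : IsTTIdeal I) (a : D) :
    IsTTIdeal {y : D | y ⊗ a ∈ I} := by
  have he : {y : D | y ⊗ a ∈ I} = {y : D | a ⊗ y ∈ I} := by
    ext y
    exact ⟨fun hy => hI.mem_of_iso ⟨β_ a y⟩ hy, fun hy => hI.mem_of_iso ⟨β_ y a⟩ hy⟩
  rw [he]
  exact isTTIdeal_tensor_left hD hI a

lemma tensor_mem_ttIdealGen_mul (hD : TensorExact D)
    {E₁ E₂ : Set D} {y₁ y₂ : D} (h₁ : y₁ ∈ ttIdealGen E₁) (h₂ : y₂ ∈ ttIdealGen E₂) :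
    y₁ ⊗ y₂ ∈ ttIdealGen {e : D | ∃ e₁ ∈ E₁, ∃ e₂ ∈ E₂, e = e₁ ⊗ e₂} := by
  set G := ttIdealGen {e : D | ∃ e₁ ∈ E₁, ∃ e₂ ∈ E₂, e = e₁ ⊗ e₂} with hG
  have hGI : IsTTIdeal G := isTTIdeal_ttIdealGen _
  have step1 : ∀ e₁ ∈ E₁, ∀ y ∈ ttIdealGen E₂, e₁ ⊗ y ∈ G := by
    intro e₁ he₁ y hy
    exact ttIdealGen_le (isTTIdeal_tensor_left hD hGI e₁)
      (fun e₂ he₂ => subset_ttIdealGen _ ⟨e₁, he₁, e₂, he₂, rfl⟩) hy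
  exact ttIdealGen_le (isTTIdeal_tensor_right hD hGI y₂)
    (fun e₁ he₁ => step1 e₁ he₁ y₂ h₂) h₁

end Ideals

section Retracts

variable [SymmetricCategory D]

lemma isZero_tensor_right (hD : TensorExact D) (A : D) {Z : D} (hZ : IsZero Z) :
    IsZero (Z ⊗ A) :=
  (isZero_tensor_left hD A hZ).of_iso (β_ Z A)

lemma zero_whiskerRight (hD : TensorExact D) (X Y m : D) : (0 : X ⟶ Y) ▷ m = 0 := by
  have h0 : (0 : X ⟶ Y) = (0 : X ⟶ (0:D)) ≫ (0 : (0:D) ⟶ Y) := by simp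
  rw [h0, comp_whiskerRight]
  have hz : IsZero ((0:D) ⊗ m) := isZero_tensor_right hD m (isZero_zero D)
  rw [hz.eq_of_tgt ((0 : X ⟶ (0:D)) ▷ m) 0, zero_comp]

lemma TClos.exists_tensor_retract (hD : TensorExact D) {y₀ m₀ : D}
    (i₀ : y₀ ⟶ y₀ ⊗ m₀) (r₀ : y₀ ⊗ m₀ ⟶ y₀) (h₀ : i₀ ≫ r₀ = 𝟙 y₀) {z : D}
    (hz : TClos y₀ z) : ∃ (m : D) (i : z ⟶ y₀ ⊗ m) (r : y₀ ⊗ m ⟶ z), i ≫ r = 𝟙 z := by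
  induction hz with
  | base => exact ⟨m₀, i₀, r₀, h₀⟩
  | shift u n hu ih =>
      obtain ⟨m, i, r, hir⟩ := ih
      obtain ⟨e⟩ := shift_tensor_iso hD y₀ m n
      refine ⟨m⟦n⟧, i⟦n⟧' ≫ e.inv, e.hom ≫ r⟦n⟧', ?_⟩
      rw [assoc, e.inv_hom_id_assoc, ← Functor.map_comp, hir]
      simp
  | tens u A hu ih =>
      obtain ⟨m, i, r, hir⟩ := ih
      refine ⟨A ⊗ m, (A ◁ i) ≫ (α_ A y₀ m).inv ≫ ((β_ A y₀).hom ▷ m) ≫ (α_ y₀ A m).hom,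
        (α_ y₀ A m).inv ≫ ((β_ y₀ A).hom ▷ m) ≫ (α_ A y₀ m).hom ≫ (A ◁ r), ?_⟩
      simp only [Category.assoc, Iso.hom_inv_id_assoc]
      rw [← comp_whiskerRight_assoc, SymmetricCategory.symmetry, id_whiskerRight, id_comp,
        Iso.inv_hom_id_assoc, ← MonoidalCategory.whiskerLeft_comp, hir,
        MonoidalCategory.whiskerLeft_id]
  | isoc u u' hu e ih =>
      obtain ⟨m, i, r, hir⟩ := ih
      exact ⟨m, e.some.inv ≫ i, r ≫ e.some.hom, by
        rw [assoc, ← assoc i, hir, id_comp, e.some.inv_hom_id]⟩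

lemma kills_of_self (hD : TensorExact D) {A B y₀ m₀ : D} (f : A ⟶ B)
    (i₀ : y₀ ⟶ y₀ ⊗ m₀) (r₀ : y₀ ⊗ m₀ ⟶ y₀) (h₀ : i₀ ≫ r₀ = 𝟙 y₀)
    (hf : f ▷ y₀ = 0) : Kills f y₀ := by
  intro z hz
  obtain ⟨m, i, r, hir⟩ := TClos.exists_tensor_retract hD i₀ r₀ h₀ hz
  refine whiskerRight_eq_zero_of_retract f i r hir ?_
  have h2 : f ▷ (y₀ ⊗ m) = (α_ A y₀ m).inv ≫ ((f ▷ y₀) ▷ m ≫ (α_ B y₀ m).hom) := by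
    rw [associator_naturality_left]
    simp
  rw [h2, hf, zero_whiskerRight hD, zero_comp, comp_zero]

end Retracts

section Mpow

open TT

lemma mpow_add_factor {x y : D} (f : x ⟶ y) (n m : ℕ) :
    ∃ (pre : opow x (n+m) ⟶ opow x n ⊗ opow x m) (post : opow y n ⊗ opow y m ⟶ opow y (n+m)),
      mpow f (n+m) = pre ≫ (mpow f n ⊗ₘ mpow f m) ≫ post := by
  induction m with
  | zero =>
      refine ⟨(ρ_ _).inv, (ρ_ _).hom, ?_⟩
      simp only [Nat.add_zero]
      show mpow f n = (ρ_ (opow x n)).inv ≫ (mpow f n ⊗ₘ (𝟙 (𝟙_ D))) ≫ (ρ_ (opow y n)).hom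
      rw [tensorHom_id, rightUnitor_naturality]
      simp
  | succ m ih =>
      obtain ⟨pre, post, hpm⟩ := ih
      refine ⟨(pre ⊗ₘ 𝟙 x) ≫ (α_ _ _ _).hom, (α_ _ _ _).inv ≫ (post ⊗ₘ 𝟙 y), ?_⟩
      show mpow f (n+m) ⊗ₘ f = _
      rw [hpm]
      calc (pre ≫ (mpow f n ⊗ₘ mpow f m) ≫ post) ⊗ₘ f
          = (pre ≫ (mpow f n ⊗ₘ mpow f m) ≫ post) ⊗ₘ (𝟙 x ≫ f ≫ 𝟙 y) := by simp
        _ = (pre ⊗ₘ 𝟙 x) ≫ (((mpow f n ⊗ₘ mpow f m) ⊗ₘ f) ≫ (post ⊗ₘ 𝟙 y)) := by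
            rw [← tensorHom_comp_tensorHom, ← tensorHom_comp_tensorHom]
        _ = (pre ⊗ₘ 𝟙 x) ≫ (α_ _ _ _).hom ≫ (mpow f n ⊗ₘ (mpow f m ⊗ₘ f)) ≫
            (α_ _ _ _).inv ≫ (post ⊗ₘ 𝟙 y) := by
            rw [← associator_naturality_assoc]
            simp
        _ = ((pre ⊗ₘ 𝟙 x) ≫ (α_ _ _ _).hom) ≫ (mpow f n ⊗ₘ mpow f (m+1)) ≫
            ((α_ _ _ _).inv ≫ (post ⊗ₘ 𝟙 y)) := by
            simp only [Category.assoc]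
            rfl

end Mpow

end Balmer

open Balmer Functor.LaxMonoidal Functor.OplaxMonoidal

variable {K : Type u} [Category.{v} K] [HasZeroObject K] [Preadditive K]
  [HasShift K ℤ] [∀ n : ℤ, (shiftFunctor K n).Additive] [Pretriangulated K]
  [MonoidalCategory K] [SymmetricCategory K] [EssentiallySmall.{v} K]
variable {L : Type u'} [Category.{v'} L] [HasZeroObject L] [Preadditive L]
  [HasShift L ℤ] [∀ n : ℤ, (shiftFunctor L n).Additive] [Pretriangulated L]
  [MonoidalCategory L] [SymmetricCategory L] [EssentiallySmall.{v'} L]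

/-- **Lemma (Balmer, key lemma).** Let `K`, `L` be essentially small tt-categories with
`K` rigid (every `x` is given a dual `d x` with coevaluation `η x` and evaluation `ε x`
satisfying the triangle identities of an exact pairing), let `F : K ⥤ L` be a
tt-functor, and for every `x` choose a distinguished triangle
`w x ⟶ 𝟙 ⟶ d x ⊗ x ⟶ Σ (w x)` over the coevaluation `η x`, with fiber `ξ x : w x ⟶ 𝟙`.
If a prime `P ∈ Spc K` satisfies: for all `x ∈ P`, `s ∉ P` and `n ≥ 1` one has
`F((ξ x)^⊗n ⊗ s) ≠ 0`, then `P` lies in the image of `φ = Spc F`, i.e. `P = F⁻¹(Q)` for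
some `Q ∈ Spc L`. -/
theorem mem_image_of_key_condition
    (hK : TensorExact K) (hL : TensorExact L)
    (F : K ⥤ L) [F.CommShift ℤ] [F.IsTriangulated] [F.Monoidal]
    (d : K → K) (η : ∀ x : K, 𝟙_ K ⟶ d x ⊗ x) (ε : ∀ x : K, x ⊗ d x ⟶ 𝟙_ K)
    (hpair₁ : ∀ x : K,
      x ◁ η x ≫ (α_ x (d x) x).inv ≫ ε x ▷ x = (ρ_ x).hom ≫ (λ_ x).inv)
    (hpair₂ : ∀ x : K,
      η x ▷ d x ≫ (α_ (d x) x (d x)).hom ≫ d x ◁ ε x = (λ_ (d x)).hom ≫ (ρ_ (d x)).inv)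
    (w : K → K) (ξ : ∀ x : K, w x ⟶ 𝟙_ K) (ζ : ∀ x : K, d x ⊗ x ⟶ (w x)⟦(1:ℤ)⟧)
    (htri : ∀ x : K, Triangle.mk (ξ x) (η x) (ζ x) ∈ distTriang K)
    (P : Spc K)
    (hP : ∀ x ∈ P.1, ∀ s : K, s ∉ P.1 → ∀ n : ℕ, 1 ≤ n →
      F.map (mpow (ξ x) n ▷ s) ≠ 0) :
    ∃ Q : Spc L, {a : K | F.obj a ∈ Q.1} = P.1 := by
  classical
  have hPideal : IsTTIdeal P.1 := P.2.toIsTTIdeal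
  have hunit_not : 𝟙_ K ∉ P.1 := by
    intro h
    apply P.2.ne_univ
    ext a
    simp only [Set.mem_univ, iff_true]
    exact hPideal.mem_of_iso ⟨(λ_ a).symm⟩ (hPideal.tensor_mem _ h a)
  -- Step 1: `F c` is killed by `F (ξ c)` together with its whole closure.
  have hgen : ∀ c : K, Kills (F.map (mpow (ξ c) 1)) (F.obj c) := by
    intro c
    have hKretr : ((ρ_ c).inv ≫ (c ◁ η c)) ≫
        ((α_ c (d c) c).inv ≫ (ε c ▷ c) ≫ (λ_ c).hom) = 𝟙 c := by
      calc ((ρ_ c).inv ≫ (c ◁ η c)) ≫ ((α_ c (d c) c).inv ≫ (ε c ▷ c) ≫ (λ_ c).hom)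
          = (ρ_ c).inv ≫ (c ◁ η c ≫ (α_ c (d c) c).inv ≫ ε c ▷ c) ≫ (λ_ c).hom := by
            simp only [assoc]
        _ = (ρ_ c).inv ≫ ((ρ_ c).hom ≫ (λ_ c).inv) ≫ (λ_ c).hom := by rw [hpair₁ c]
        _ = 𝟙 c := by simp
    have hw : (c ◁ η c) ≫ ((α_ c (d c) c).inv ≫ (ε c ▷ c) ≫ (λ_ c).hom ≫ (ρ_ c).inv) =
        𝟙 (c ⊗ 𝟙_ K) := by
      calc (c ◁ η c) ≫ ((α_ c (d c) c).inv ≫ (ε c ▷ c) ≫ (λ_ c).hom ≫ (ρ_ c).inv)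
          = (c ◁ η c ≫ (α_ c (d c) c).inv ≫ ε c ▷ c) ≫ ((λ_ c).hom ≫ (ρ_ c).inv) := by
            simp only [assoc]
        _ = ((ρ_ c).hom ≫ (λ_ c).inv) ≫ ((λ_ c).hom ≫ (ρ_ c).inv) := by rw [hpair₁ c]
        _ = 𝟙 (c ⊗ 𝟙_ K) := by simp
    have hFη : (F.obj c ◁ F.map (η c)) =
        μ F c (𝟙_ K) ≫ F.map (c ◁ η c) ≫ δ F c (d c ⊗ c) := by
      rw [Functor.Monoidal.map_whiskerLeft]
      simp only [assoc, Functor.Monoidal.μ_δ_assoc, Functor.Monoidal.μ_δ, comp_id]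
    have hρc : (F.obj c ◁ F.map (η c)) ≫ (μ F c (d c ⊗ c) ≫
        F.map ((α_ c (d c) c).inv ≫ (ε c ▷ c) ≫ (λ_ c).hom ≫ (ρ_ c).inv) ≫ δ F c (𝟙_ K)) =
        𝟙 _ := by
      rw [hFη]
      simp only [assoc, Functor.Monoidal.δ_μ_assoc]
      rw [← F.map_comp_assoc, hw, F.map_id, id_comp, Functor.Monoidal.μ_δ]
    obtain ⟨hco, hd⟩ := (hL (F.obj c) _ (F.map_distinguished _ (htri c))).1
    have h12 := comp_distTriang_mor_zero₁₂ _ hd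
    simp only [Triangle.mk_mor₁, Triangle.mk_mor₂, Functor.mapTriangle_obj] at h12
    have hz1 : F.obj c ◁ F.map (ξ c) = 0 := by
      have h3 : (F.obj c ◁ F.map (ξ c)) ≫ ((F.obj c ◁ F.map (η c)) ≫ (μ F c (d c ⊗ c) ≫
          F.map ((α_ c (d c) c).inv ≫ (ε c ▷ c) ≫ (λ_ c).hom ≫ (ρ_ c).inv) ≫ δ F c (𝟙_ K)))
          = F.obj c ◁ F.map (ξ c) := by rw [hρc, comp_id]
      rw [← h3, ← assoc, show (F.obj c ◁ F.map (ξ c) ≫ F.obj c ◁ F.map (η c)) = 0 from h12, zero_comp]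
    have hz2 : F.map (ξ c) ▷ F.obj c = 0 := by
      have hb := BraidedCategory.braiding_naturality_left (F.map (ξ c)) (F.obj c)
      have h4 : F.map (ξ c) ▷ F.obj c ≫ (β_ (F.obj (𝟙_ K)) (F.obj c)).hom = 0 := by
        rw [hb, hz1, comp_zero]
      calc F.map (ξ c) ▷ F.obj c
          = (F.map (ξ c) ▷ F.obj c ≫ (β_ (F.obj (𝟙_ K)) (F.obj c)).hom) ≫
            (β_ (F.obj (𝟙_ K)) (F.obj c)).inv := by simp
        _ = 0 := by rw [h4, zero_comp]
    have hi₀ : (F.map ((ρ_ c).inv ≫ (c ◁ η c)) ≫ δ F c (d c ⊗ c)) ≫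
        (μ F c (d c ⊗ c) ≫ F.map ((α_ c (d c) c).inv ≫ (ε c ▷ c) ≫ (λ_ c).hom)) =
        𝟙 (F.obj c) := by
      rw [assoc, Functor.Monoidal.δ_μ_assoc, ← F.map_comp, hKretr, F.map_id]
    have hk1 : Kills (F.map (ξ c)) (F.obj c) := kills_of_self hL (F.map (ξ c)) _ _ hi₀ hz2
    refine hk1.factor (F.map ((λ_ (w c)).hom)) (F.map ((λ_ (𝟙_ K)).inv)) ?_
    erw [← F.map_comp, ← F.map_comp]
    congr 1
    show 𝟙 (𝟙_ K) ⊗ₘ ξ c = _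
    rw [id_tensorHom]
    show 𝟙_ K ◁ ξ c = (λ_ (w c)).hom ≫ ξ c ≫ (λ_ (𝟙_ K)).inv
    rw [← leftUnitor_naturality_assoc]
    simp
  -- Step 2: for each `c`, the ξ-nilpotent objects form a tt-ideal of `L`.
  have hN : ∀ c : K, IsTTIdeal {y : L | ∃ n : ℕ, 1 ≤ n ∧ Kills (F.map (mpow (ξ c) n)) y} := by
    intro c
    constructor
    · exact ⟨1, le_refl 1, Kills.of_isZero _ hL (isZero_zero L)⟩
    · rintro n x ⟨k, hk, hkill⟩
      exact ⟨k, hk, hkill.of_tclos (TClos.base.shift _ n)⟩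
    · rintro T hT ⟨n₁, hn₁, hk₁⟩ ⟨n₂, hn₂, hk₂⟩
      obtain ⟨pre, post, heqK⟩ := mpow_add_factor (ξ c) n₁ n₂
      refine ⟨n₁ + n₂, by omega, ?_⟩
      refine (Kills.cone hL hT hk₁ hk₂).factor
        (F.map pre ≫ δ F (opow (w c) n₁) (opow (w c) n₂))
        (μ F (opow (𝟙_ K) n₁) (opow (𝟙_ K) n₂) ≫ F.map post) ?_
      rw [heqK, F.map_comp, F.map_comp, Functor.Monoidal.map_tensor]
      simp only [assoc]
    · rintro x z ⟨n, hn, hkill⟩ i r hir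
      exact ⟨n, hn, hkill.of_retract hL i r hir⟩
    · rintro x ⟨n, hn, hkill⟩ y
      exact ⟨n, hn, hkill.of_tclos (TClos.isoc _ _ (TClos.base.tens _ y) ⟨β_ y x⟩)⟩
    · rintro x ⟨n, hn, hkill⟩ y
      exact ⟨n, hn, hkill.of_tclos (TClos.base.tens _ y)⟩
  -- Step 3: finite families in `P` admit a common "sum" in `P`.
  have hsum : ∀ l : List K, (∀ x ∈ l, x ∈ P.1) →
      ∃ c ∈ P.1, ∀ x ∈ l, ∃ (i : x ⟶ c) (r : c ⟶ x), i ≫ r = 𝟙 x := by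
    intro l
    induction l with
    | nil => exact fun _ => ⟨0, hPideal.zero_mem, by simp⟩
    | cons x l ih =>
        intro hmem
        obtain ⟨c', hc', hr⟩ := ih (fun y hy => hmem y (List.mem_cons_of_mem _ hy))
        refine ⟨x ⊞ c', hPideal.biprod_mem (hmem x (List.mem_cons_self)) hc', ?_⟩
        intro z hz
        rcases List.mem_cons.1 hz with rfl | hz'
        · exact ⟨biprod.inl, biprod.fst, by simp⟩
        · obtain ⟨i, r, hir⟩ := hr z hz'
          exact ⟨i ≫ biprod.inr, biprod.snd ≫ r, by
            rw [assoc, biprod.inr_snd_assoc, hir]⟩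
  -- Step 4: decompose membership in the ideal generated by `F '' P`.
  have hdec : ∀ y ∈ ttIdealGen (F.obj '' P.1), ∃ l : List K,
      (∀ x ∈ l, x ∈ P.1) ∧ y ∈ ttIdealGen (F.obj '' {x | x ∈ l}) := by
    have hDideal : IsTTIdeal {y : L | ∃ l : List K,
        (∀ x ∈ l, x ∈ P.1) ∧ y ∈ ttIdealGen (F.obj '' {x | x ∈ l})} := by
      constructor
      · exact ⟨[], by simp, (isTTIdeal_ttIdealGen _).zero_mem⟩
      · rintro n x ⟨l, hl, hx⟩
        exact ⟨l, hl, (isTTIdeal_ttIdealGen _).shift_mem n x hx⟩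
      · rintro T hT ⟨l₁, hl₁, hx₁⟩ ⟨l₂, hl₂, hx₂⟩
        refine ⟨l₁ ++ l₂, ?_, (isTTIdeal_ttIdealGen _).cone_mem T hT
          (ttIdealGen_mono (Set.image_mono ?_) hx₁)
          (ttIdealGen_mono (Set.image_mono ?_) hx₂)⟩
        · intro z hz
          rcases List.mem_append.1 hz with h | h
          exacts [hl₁ z h, hl₂ z h]
        · intro z hz
          exact List.mem_append.2 (Or.inl hz)
        · intro z hz
          exact List.mem_append.2 (Or.inr hz)
      · rintro x z ⟨l, hl, hz⟩ i r hir
        exact ⟨l, hl, (isTTIdeal_ttIdealGen _).retract_mem x z hz i r hir⟩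
      · rintro x ⟨l, hl, hx⟩ y
        exact ⟨l, hl, (isTTIdeal_ttIdealGen _).tensor_mem x hx y⟩
      · rintro x ⟨l, hl, hx⟩ y
        exact ⟨l, hl, (isTTIdeal_ttIdealGen _).tensor_mem' x hx y⟩
    intro y hy
    refine ttIdealGen_le hDideal ?_ hy
    rintro _ ⟨x, hx, rfl⟩
    exact ⟨[x], by simpa using hx, subset_ttIdealGen _ ⟨x, by simp, rfl⟩⟩
  -- Step 5: the ideal generated by `F '' P` misses all `F s`, `s ∉ P`.
  have hdisj : ∀ y ∈ ttIdealGen (F.obj '' P.1),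
      ¬ ∃ s : K, s ∉ P.1 ∧ Nonempty (y ≅ F.obj s) := by
    rintro y hy ⟨s, hs, ⟨e⟩⟩
    obtain ⟨l, hl, hyl⟩ := hdec y hy
    obtain ⟨c, hcP, hretr⟩ := hsum l hl
    have hFc : F.obj c ∈ {y : L | ∃ n : ℕ, 1 ≤ n ∧ Kills (F.map (mpow (ξ c) n)) y} :=
      ⟨1, le_refl 1, hgen c⟩
    have hsub : F.obj '' {x | x ∈ l} ⊆
        {y : L | ∃ n : ℕ, 1 ≤ n ∧ Kills (F.map (mpow (ξ c) n)) y} := by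
      rintro _ ⟨x, hxl, rfl⟩
      obtain ⟨i, r, hir⟩ := hretr x hxl
      exact (hN c).retract_mem _ _ hFc (F.map i) (F.map r)
        (by rw [← F.map_comp, hir, F.map_id])
    have hyN : y ∈ {y : L | ∃ n : ℕ, 1 ≤ n ∧ Kills (F.map (mpow (ξ c) n)) y} :=
      ttIdealGen_le (hN c) hsub hyl
    have hsN : F.obj s ∈ {y : L | ∃ n : ℕ, 1 ≤ n ∧ Kills (F.map (mpow (ξ c) n)) y} :=
      (hN c).mem_of_iso ⟨e.symm⟩ hyN
    obtain ⟨n, hn1, hkill⟩ := hsN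
    have h0 : F.map (mpow (ξ c) n) ▷ F.obj s = 0 := hkill _ TClos.base
    have hFz : F.map (mpow (ξ c) n ▷ s) = 0 := by
      rw [Functor.Monoidal.map_whiskerRight, h0, zero_comp, comp_zero]
    exact hP c hcP s hs n hn1 hFz
  -- Step 6: Zorn's lemma.
  have hG0 : ttIdealGen (F.obj '' P.1) ∈ {I : Set L | IsTTIdeal I ∧
      ttIdealGen (F.obj '' P.1) ⊆ I ∧ ∀ y ∈ I, ¬ ∃ s : K, s ∉ P.1 ∧ Nonempty (y ≅ F.obj s)} :=
    ⟨isTTIdeal_ttIdealGen _, subset_rfl, hdisj⟩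
  obtain ⟨Q, hQ0, hQmax⟩ := zorn_subset_nonempty _ (fun ch hchsub hchain hchne => by
      refine ⟨⋃₀ ch, ⟨isTTIdeal_sUnion hchne hchain.directedOn
        (fun I hI => (hchsub hI).1), ?_, ?_⟩, fun sI hsI => Set.subset_sUnion_of_mem hsI⟩
      · exact (hchsub hchne.choose_spec).2.1.trans
          (Set.subset_sUnion_of_mem hchne.choose_spec)
      · rintro y ⟨I, hI, hyI⟩
        exact (hchsub hI).2.2 y hyI) _ hG0
  have hQI : IsTTIdeal Q := hQmax.1.1
  have hQG : ttIdealGen (F.obj '' P.1) ⊆ Q := hQmax.1.2.1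
  have hQS : ∀ y ∈ Q, ¬ ∃ s : K, s ∉ P.1 ∧ Nonempty (y ≅ F.obj s) := hQmax.1.2.2
  -- Step 7: maximality yields primality.
  have hprime : IsPrimeTTIdeal Q := by
    refine ⟨hQI, ?_, ?_⟩
    · intro huniv
      exact hQS (𝟙_ L) (huniv ▸ Set.mem_univ _) ⟨𝟙_ K, hunit_not, ⟨Functor.Monoidal.εIso F⟩⟩
    · intro a b hab
      by_contra hcon
      push_neg at hcon
      obtain ⟨ha, hb⟩ := hcon
      have key : ∀ u : L, u ∉ Q →
          ∃ y ∈ ttIdealGen (Q ∪ {u}), ∃ s : K, s ∉ P.1 ∧ Nonempty (y ≅ F.obj s) := by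
        intro u hu
        by_contra hnone
        push_neg at hnone
        have hmemg : ttIdealGen (Q ∪ {u}) ∈ {I : Set L | IsTTIdeal I ∧
            ttIdealGen (F.obj '' P.1) ⊆ I ∧
            ∀ y ∈ I, ¬ ∃ s : K, s ∉ P.1 ∧ Nonempty (y ≅ F.obj s)} := by
          refine ⟨isTTIdeal_ttIdealGen _,
            hQG.trans (Set.subset_union_left.trans (subset_ttIdealGen _)), ?_⟩
          intro y hy
          rw [not_exists]
          intro s
          rw [not_and]
          intro hsP hne
          obtain ⟨e⟩ := hne
          exact (hnone y hy s hsP).false e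
        have hle := hQmax.2 hmemg (Set.subset_union_left.trans (subset_ttIdealGen _))
        exact hu (hle (subset_ttIdealGen _ (Set.mem_union_right _ rfl)))
      obtain ⟨y₁, hy₁, s₁, hs₁, ⟨e₁⟩⟩ := key a ha
      obtain ⟨y₂, hy₂, s₂, hs₂, ⟨e₂⟩⟩ := key b hb
      have hmul := tensor_mem_ttIdealGen_mul hL hy₁ hy₂
      have hmulsub : {e : L | ∃ e₁ ∈ Q ∪ {a}, ∃ e₂ ∈ Q ∪ {b}, e = e₁ ⊗ e₂} ⊆ Q := by
        rintro _ ⟨e₁, he₁, e₂, he₂, rfl⟩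
        rcases he₁ with he₁ | he₁
        · exact hQI.tensor_mem _ he₁ _
        · rw [Set.mem_singleton_iff] at he₁
          subst he₁
          rcases he₂ with he₂ | he₂
          · exact hQI.tensor_mem' _ he₂ _
          · rw [Set.mem_singleton_iff] at he₂
            subst he₂
            exact hab
      have hyQ : y₁ ⊗ y₂ ∈ Q := ttIdealGen_le hQI hmulsub hmul
      have hs12 : s₁ ⊗ s₂ ∉ P.1 := by
        intro h
        rcases P.2.mem_or_mem _ _ h with h | h
        exacts [hs₁ h, hs₂ h]
      exact hQS _ hyQ ⟨s₁ ⊗ s₂, hs12,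
        ⟨(tensorIso e₁ e₂) ≪≫ Functor.Monoidal.μIso F s₁ s₂⟩⟩
  -- Step 8: conclusion.
  refine ⟨⟨Q, hprime⟩, ?_⟩
  ext a
  simp only [Set.mem_setOf_eq]
  constructor
  · intro haQ
    by_contra hanP
    exact hQS _ haQ ⟨a, hanP, ⟨Iso.refl _⟩⟩
  · intro haP
    exact hQG (subset_ttIdealGen _ ⟨a, haP, rfl⟩)
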